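/- arXiv:1904.01645 — 3 statements merged into one kernel-verified Lean document; each statement's English description precedes it below -/
import Mathlib

section
/- Let q be a unit quaternion, let u be a purely imaginary quaternion with ‖u‖ = 1, and let θ ∈ [0, π]. Set e = cos(θ/2) + sin(θ/2)·u (the unit quaternion representing a rotation by angle θ about axis u). Then min(‖q − q·e‖, ‖q + q·e‖) = 2·sin(θ/4). -/
open Quaternion in
lemma quat_aux_norm (u : Quaternion ℝ) (hu_im : u.re = 0) (hu : ‖u‖ = 1)
    (c s : ℝ) : ‖(c : Quaternion ℝ) + s • u‖ ^ 2 = c ^ 2 + s ^ 2 := by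
  have h1 : normSq u = 1 := by
    rw [Quaternion.normSq_eq_norm_mul_self, hu]; ring
  have h2 : u.imI ^ 2 + u.imJ ^ 2 + u.imK ^ 2 = 1 := by
    rw [Quaternion.normSq_def'] at h1
    rw [hu_im] at h1; nlinarith [h1]
  have h3 : ‖(c : Quaternion ℝ) + s • u‖ ^ 2 = normSq ((c : Quaternion ℝ) + s • u) := by
    rw [Quaternion.normSq_eq_norm_mul_self]; ring
  rw [h3, Quaternion.normSq_def']
  simp [hu_im]
  nlinarith [h2]

/-- If `q` is a unit quaternion, `u` a purely imaginary unit quaternion, `θ ∈ [0, π]`,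
and `e = cos(θ/2) + sin(θ/2)·u`, then `min (‖q - q·e‖, ‖q + q·e‖) = 2·sin(θ/4)`. -/
theorem quaternion_distance_eq_two_sin_quarter_angle
    (q u : Quaternion ℝ) (hq : ‖q‖ = 1) (hu_im : u.re = 0) (hu : ‖u‖ = 1)
    (θ : ℝ) (hθ0 : 0 ≤ θ) (hθπ : θ ≤ Real.pi)
    (e : Quaternion ℝ) (he : e = (Real.cos (θ / 2) : Quaternion ℝ) + Real.sin (θ / 2) • u) :
    min ‖q - q * e‖ ‖q + q * e‖ = 2 * Real.sin (θ / 4) := by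
  set c := Real.cos (θ / 2)
  set s := Real.sin (θ / 2)
  have hsin4 : 0 ≤ Real.sin (θ / 4) := by
    apply Real.sin_nonneg_of_nonneg_of_le_pi <;> linarith [Real.pi_pos]
  have hcos4 : 0 ≤ Real.cos (θ / 4) := by
    apply Real.cos_nonneg_of_mem_Icc
    constructor <;> linarith [Real.pi_pos]
  have hc : c = 1 - 2 * Real.sin (θ / 4) ^ 2 := by
    have h4 : θ / 2 = 2 * (θ / 4) := by ring
    rw [show c = Real.cos (θ/2) from rfl, h4, Real.cos_two_mul']
    nlinarith [Real.sin_sq_add_cos_sq (θ / 4)]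
  have hc' : c = 2 * Real.cos (θ / 4) ^ 2 - 1 := by
    have : θ / 2 = 2 * (θ / 4) := by ring
    rw [show c = Real.cos (θ/2) from rfl, this, Real.cos_two_mul]
  have hsub : q - q * e = q * (1 - e) := by rw [mul_sub, mul_one]
  have hadd : q + q * e = q * (1 + e) := by rw [mul_add, mul_one]
  have h1e : (1 : Quaternion ℝ) - e = ((1 - c : ℝ) : Quaternion ℝ) + (-s) • u := by
    rw [he]; push_cast; module
  have h1e' : (1 : Quaternion ℝ) + e = ((1 + c : ℝ) : Quaternion ℝ) + s • u := by
    rw [he]; push_cast; module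
  have hsc : s ^ 2 + c ^ 2 = 1 := Real.sin_sq_add_cos_sq _
  have hn1 : ‖(1 : Quaternion ℝ) - e‖ = 2 * Real.sin (θ / 4) := by
    have h := quat_aux_norm u hu_im hu (1 - c) (-s)
    rw [← h1e] at h
    have h2 : ‖(1 : Quaternion ℝ) - e‖ ^ 2 = (2 * Real.sin (θ / 4)) ^ 2 := by
      rw [h]; nlinarith [hsc, hc]
    calc ‖(1 : Quaternion ℝ) - e‖ = Real.sqrt (‖(1 : Quaternion ℝ) - e‖ ^ 2) :=
          (Real.sqrt_sq (norm_nonneg _)).symm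
      _ = 2 * Real.sin (θ / 4) := by rw [h2, Real.sqrt_sq (by positivity)]
  have hn2 : ‖(1 : Quaternion ℝ) + e‖ = 2 * Real.cos (θ / 4) := by
    have h := quat_aux_norm u hu_im hu (1 + c) s
    rw [← h1e'] at h
    have h2 : ‖(1 : Quaternion ℝ) + e‖ ^ 2 = (2 * Real.cos (θ / 4)) ^ 2 := by
      rw [h]; nlinarith [hsc, hc']
    calc ‖(1 : Quaternion ℝ) + e‖ = Real.sqrt (‖(1 : Quaternion ℝ) + e‖ ^ 2) :=
          (Real.sqrt_sq (norm_nonneg _)).symm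
      _ = 2 * Real.cos (θ / 4) := by rw [h2, Real.sqrt_sq (by positivity)]
  have hle : Real.sin (θ / 4) ≤ Real.cos (θ / 4) := by
    have : Real.sin (θ / 4) = Real.cos (Real.pi / 2 - θ / 4) := (Real.cos_pi_div_two_sub _).symm
    rw [this]
    apply Real.cos_le_cos_of_nonneg_of_le_pi <;> linarith [Real.pi_pos]
  rw [hsub, hadd, norm_mul, norm_mul, hq, one_mul, one_mul, hn1, hn2]
  rw [min_eq_left]; linarith
end

section
/- The polynomial p = 2·z₂z₆ − 2·z₃z₅ in the real polynomial ring ℝ[z₁, …, z₆] is not a sum of squares of polynomials. -/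
open MvPolynomial

lemma eval_nonneg_of_isSumSq {p : MvPolynomial (Fin 6) ℝ} (h : IsSumSq p)
    (v : Fin 6 → ℝ) : 0 ≤ eval v p := by
  induction h with
  | zero => simp
  | sq_add a _ ih =>
      rw [map_add, map_mul]
      exact add_nonneg (mul_self_nonneg _) ih

/-- The polynomial `2·z₂z₆ - 2·z₃z₅ ∈ ℝ[z₁, …, z₆]` is not a sum of squares. -/
theorem not_isSumSq_handedness_hessian_form :
    ¬ IsSumSq (2 * X 1 * X 5 - 2 * X 2 * X 4 :
        MvPolynomial (Fin 6) ℝ) := by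
  intro h
  have := eval_nonneg_of_isSumSq h (fun i => if i = 1 then 1 else if i = 5 then -1 else 0)
  simp at this
  linarith
end

section
/- (Ahmadi–Parrilo) A polynomial f ∈ ℝ[x₁, …, xₙ] is SOS-convex — i.e., there exist a ∈ ℕ and an n×a matrix L of polynomials in ℝ[x₁, …, xₙ] such that the Hessian matrix H(f) with entries H_{ij} = ∂²f/∂x_i∂x_j satisfies H(f) = L·Lᵀ — if and only if the polynomial ∑_{i,j} z_i z_j · ∂²f/∂x_i∂x_j, regarded as an element of the polynomial ring ℝ[x₁, …, xₙ, z₁, …, zₙ] in 2n variables, is a sum of squares of polynomials. -/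
open MvPolynomial

namespace SOSAux

variable {R S : Type*} [CommRing R] [CommRing S] {σ : Type*} {n : ℕ}

theorem isSumSq_map (g : R →+* S) {a : R} (h : IsSumSq a) : IsSumSq (g a) := by
  induction h with
  | zero => simpa using IsSumSq.zero
  | sq_add a ps ih => simpa [map_add, map_mul] using IsSumSq.sq_add (g a) ih

theorem isSumSq_list {a : R} (h : IsSumSq a) :
    ∃ l : List R, a = (l.map fun q => q * q).sum := by
  induction h with
  | zero => exact ⟨[], rfl⟩
  | sq_add a ps ih =>
    obtain ⟨l, hl⟩ := ih
    exact ⟨a :: l, by simp [hl]⟩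

/-- "formally real" for finite (list) sums of squares -/
def FR (R : Type*) [CommRing R] : Prop :=
  ∀ l : List R, (l.map fun q => q * q).sum = 0 → ∀ q ∈ l, q = 0

theorem fr_real : FR ℝ := by
  have key : ∀ l : List ℝ, (0:ℝ) ≤ (l.map fun q => q * q).sum := by
    intro l
    induction l with
    | nil => simp
    | cons a t ih => simpa using add_nonneg (mul_self_nonneg a) ih
  intro l hl
  induction l with
  | nil => simp
  | cons a t ih =>
    simp only [List.map_cons, List.sum_cons] at hl
    have h1 : a * a = 0 := le_antisymm (by nlinarith [key t]) (mul_self_nonneg a)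
    have h2 : (t.map fun q => q * q).sum = 0 := by
      rw [h1, zero_add] at hl; exact hl
    intro q hq
    rcases List.mem_cons.mp hq with h | h
    · subst h; exact mul_self_eq_zero.mp h1
    · exact ih h2 q h

theorem fr_of_injective (g : R →+* S) (hg : Function.Injective g) (h : FR S) : FR R := by
  intro l hl q hq
  apply hg
  rw [map_zero]
  refine h (l.map g) ?_ (g q) (List.mem_map_of_mem (f := g) hq)
  have := congrArg g hl
  rw [map_zero, map_list_sum, List.map_map] at this
  rw [List.map_map]
  have heq : (fun r => r * r) ∘ g = g ∘ (fun q => q * q) := by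
    funext r; simp [Function.comp, map_mul]
  rw [heq]
  exact this

theorem fr_mv (σ : Type*) : FR (MvPolynomial σ ℝ) := by
  intro l hl q hq
  apply MvPolynomial.funext (R := ℝ)
  intro x
  rw [map_zero]
  have := congrArg (eval x) hl
  rw [map_zero, map_list_sum, List.map_map] at this
  refine fr_real (l.map (eval x)) ?_ (eval x q) (List.mem_map_of_mem hq)
  rw [List.map_map]
  have heq : ((fun r => r * r) ∘ eval x) = (eval x ∘ fun q => q * q) := by
    funext r; simp [Function.comp]
  rw [heq]
  exact this

theorem hc_self_of_mem {d : ℕ} {φ : MvPolynomial σ R}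
    (h : φ ∈ homogeneousSubmodule σ R d) : homogeneousComponent d φ = φ := by
  rw [homogeneousComponent_of_mem h, if_pos rfl]

theorem degree_eq_sum (m : σ →₀ ℕ) : Finsupp.degree m = m.sum fun _ e => e := rfl

theorem totalDegree_sub_hc_le (φ : MvPolynomial σ R) (d : ℕ)
    (hd : φ.totalDegree ≤ d) :
    (φ - homogeneousComponent d φ).totalDegree ≤ d - 1 := by
  classical
  apply Finset.sup_le
  intro m hm
  rw [mem_support_iff, coeff_sub, coeff_homogeneousComponent] at hm
  by_cases h : Finsupp.degree m = d
  · simp [h] at hm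
  · rw [if_neg h, sub_zero] at hm
    have h1 : (m.sum fun _ e => e) ≤ d :=
      le_trans (le_totalDegree (mem_support_iff.mpr hm)) hd
    rw [← degree_eq_sum] at h1 ⊢
    omega

/-- key top-degree computation: component `2d` of a square -/
theorem hc_sq (d : ℕ) (hd : 1 ≤ d) (q : MvPolynomial σ R) (hq : q.totalDegree ≤ d) :
    homogeneousComponent (2 * d) (q * q) =
      homogeneousComponent d q * homogeneousComponent d q := by
  set c := homogeneousComponent d q with hc
  set r := q - c with hr
  have hrd : r.totalDegree ≤ d - 1 := totalDegree_sub_hc_le q d hq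
  have hq' : q = r + c := by rw [hr]; ring
  have hcc : c * c ∈ homogeneousSubmodule σ R (2 * d) := by
    rw [mem_homogeneousSubmodule]
    have := (homogeneousComponent_isHomogeneous d q).mul (homogeneousComponent_isHomogeneous d q)
    simpa [two_mul] using this
  have l1 : homogeneousComponent (2 * d) (r * r) = 0 := by
    apply homogeneousComponent_eq_zero
    calc (r * r).totalDegree ≤ r.totalDegree + r.totalDegree := totalDegree_mul r r
    _ < 2 * d := by omega
  have l2 : homogeneousComponent (2 * d) (r * c) = 0 := by
    apply homogeneousComponent_eq_zero
    have := totalDegree_mul r c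
    have hcd : c.totalDegree ≤ d := by
      by_cases h0 : c = 0
      · simp [h0]
      · exact IsHomogeneous.totalDegree_le (homogeneousComponent_isHomogeneous d q)
    omega
  have l3 : homogeneousComponent (2 * d) (c * c) = c * c := hc_self_of_mem hcc
  have expand : q * q = r * r + r * c + r * c + c * c := by rw [hq']; ring
  rw [expand, map_add, map_add, map_add, l1, l2, l3]
  ring

theorem peel (hFR : FR (MvPolynomial σ R)) {P : MvPolynomial σ R}
    (hP : P ∈ homogeneousSubmodule σ R 2)
    (l : List (MvPolynomial σ R)) (hl : (l.map fun q => q * q).sum = P)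
    (d : ℕ) (hd : 2 ≤ d) (hdeg : ∀ q ∈ l, q.totalDegree ≤ d) :
    ∀ q ∈ l, q.totalDegree ≤ d - 1 := by
  have h2d : homogeneousComponent (2 * d) P = 0 := by
    rw [homogeneousComponent_of_mem hP, if_neg (by omega)]
  have key : (l.map fun q =>
      homogeneousComponent d q * homogeneousComponent d q).sum = 0 := by
    have e1 : (l.map fun q => homogeneousComponent d q * homogeneousComponent d q)
        = (l.map fun q => homogeneousComponent (2 * d) (q * q)) := by
      apply List.map_congr_left
      intro q hq
      exact (hc_sq d (by omega) q (hdeg q hq)).symm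
    rw [e1]
    have e2 := map_list_sum (homogeneousComponent (2 * d) :
        MvPolynomial σ R →ₗ[R] MvPolynomial σ R) (l.map fun q => q * q)
    rw [hl, h2d, List.map_map] at e2
    exact e2.symm
  intro q hq
  have hz : homogeneousComponent d q = 0 := by
    have : ((l.map (homogeneousComponent d)).map fun r => r * r).sum = 0 := by
      rw [List.map_map]; exact key
    exact hFR _ this _ (List.mem_map_of_mem hq)
  have := totalDegree_sub_hc_le q d (hdeg q hq)
  rwa [hz, sub_zero] at this

theorem totalDegree_le_one (hFR : FR (MvPolynomial σ R)) {P : MvPolynomial σ R}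
    (hP : P ∈ homogeneousSubmodule σ R 2)
    (l : List (MvPolynomial σ R)) (hl : (l.map fun q => q * q).sum = P) :
    ∀ q ∈ l, q.totalDegree ≤ 1 := by
  have key : ∀ j : ℕ, (∀ q ∈ l, q.totalDegree ≤ 1 + j) → ∀ q ∈ l, q.totalDegree ≤ 1 := by
    intro j
    induction j with
    | zero => simp
    | succ j ih =>
      intro h
      apply ih
      intro q hq
      have := peel hFR hP l hl (1 + (j + 1)) (by omega) h q hq
      omega
  apply key ((l.map totalDegree).sum)
  intro q hq
  have : q.totalDegree ≤ (l.map totalDegree).sum :=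
    List.le_sum_of_mem (List.mem_map_of_mem hq)
  omega

theorem constCoeff_eq_zero (hFR : FR (MvPolynomial σ R)) {P : MvPolynomial σ R}
    (hP : P ∈ homogeneousSubmodule σ R 2)
    (l : List (MvPolynomial σ R)) (hl : (l.map fun q => q * q).sum = P) :
    ∀ q ∈ l, constantCoeff q = 0 := by
  have h0 : homogeneousComponent 0 P = 0 := by
    rw [homogeneousComponent_of_mem hP, if_neg (by omega)]
  have key : (l.map fun q => (C (constantCoeff q) : MvPolynomial σ R)
      * C (constantCoeff q)).sum = 0 := by
    have e1 : (l.map fun q => (C (constantCoeff q) : MvPolynomial σ R) * C (constantCoeff q))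
        = (l.map fun q => homogeneousComponent 0 (q * q)) := by
      apply List.map_congr_left
      intro q _
      rw [homogeneousComponent_zero, ← constantCoeff_eq, map_mul, map_mul]
    rw [e1]
    have e2 := map_list_sum (homogeneousComponent 0 :
        MvPolynomial σ R →ₗ[R] MvPolynomial σ R) (l.map fun q => q * q)
    rw [hl, h0, List.map_map] at e2
    exact e2.symm
  intro q hq
  have hz : (C (constantCoeff q) : MvPolynomial σ R) = 0 := by
    have : ((l.map fun q => (C (constantCoeff q) : MvPolynomial σ R)).map
        fun r => r * r).sum = 0 := by
      rw [List.map_map]; exact key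
    exact hFR _ this _ (List.mem_map_of_mem hq)
  exact (map_eq_zero_iff _ (C_injective σ R)).mp hz

theorem eq_single_of_degree_one {m : Fin n →₀ ℕ} (h : (m.sum fun _ e => e) = 1) :
    ∃ i, m = Finsupp.single i 1 := by
  classical
  have hne : m.support.Nonempty := by
    rw [Finset.nonempty_iff_ne_empty]
    intro hc
    rw [Finsupp.sum, hc] at h
    simp at h
  obtain ⟨i, hi⟩ := hne
  have hsum : m i + ∑ x ∈ m.support.erase i, m x = 1 := by
    rw [Finset.add_sum_erase _ _ hi]
    exact h
  have hmi : 1 ≤ m i := Nat.one_le_iff_ne_zero.mpr (Finsupp.mem_support_iff.mp hi)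
  have hrest : ∑ x ∈ m.support.erase i, m x = 0 := by omega
  refine ⟨i, ?_⟩
  rw [Finsupp.eq_single_iff]
  constructor
  · intro j hj
    by_contra hji
    have hj' : j ∈ m.support.erase i := Finset.mem_erase.mpr ⟨by simpa using hji, hj⟩
    have := Finset.sum_eq_zero_iff.mp hrest j hj'
    exact (Finsupp.mem_support_iff.mp hj) this
  · omega

theorem eq_linear_form (q : MvPolynomial (Fin n) R)
    (hdeg : q.totalDegree ≤ 1) (hc : constantCoeff q = 0) :
    q = ∑ i : Fin n, C (coeff (Finsupp.single i 1) q) * X i := by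
  classical
  ext m
  rw [coeff_sum]
  have hterm : ∀ i : Fin n, coeff m (C (coeff (Finsupp.single i 1) q) * X i)
      = if Finsupp.single i 1 = m then coeff (Finsupp.single i 1) q else 0 := by
    intro i
    rw [show ((X i : MvPolynomial (Fin n) R)) = monomial (Finsupp.single i 1) 1 from rfl,
      C_mul_monomial, mul_one, coeff_monomial]
  simp only [hterm]
  by_cases h0 : m = 0
  · subst h0
    rw [show coeff 0 q = constantCoeff q from rfl, hc]
    rw [Finset.sum_eq_zero]
    intro i _
    rw [if_neg]
    intro hcon
    have := DFunLike.congr_fun hcon i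
    simp at this
  · by_cases h1 : (m.sum fun _ e => e) = 1
    · obtain ⟨i0, rfl⟩ := eq_single_of_degree_one h1
      rw [Finset.sum_eq_single i0]
      · rw [if_pos rfl]
      · intro j _ hji
        rw [if_neg]
        intro hcon
        exact hji (by
          have := DFunLike.congr_fun hcon j
          by_contra hne
          simp [Finsupp.single_apply, Ne.symm hne] at this)
      · intro hcon; exact absurd (Finset.mem_univ i0) hcon
    · have hl : coeff m q = 0 := by
        by_contra hne
        have hle : (m.sum fun _ e => e) ≤ 1 :=
          le_trans (le_totalDegree (mem_support_iff.mpr hne)) hdeg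
        have : (m.sum fun _ e => e) = 0 := by omega
        exact h0 (by
          ext j
          by_contra hj
          have hjs : j ∈ m.support := Finsupp.mem_support_iff.mpr (by simpa using hj)
          have := Finset.sum_eq_zero_iff.mp this j hjs
          exact (Finsupp.mem_support_iff.mp hjs) this)
      rw [hl, Finset.sum_eq_zero]
      intro i _
      rw [if_neg]
      intro hcon
      subst hcon
      simp [Finsupp.sum_single_index] at h1

theorem pderiv_pderiv_comm (i j : σ) (f : MvPolynomial σ R) :
    pderiv i (pderiv j f) = pderiv j (pderiv i f) := by
  classical
  induction f using MvPolynomial.induction_on with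
  | C a => simp
  | add p q hp hq => simp [hp, hq]
  | mul_X p k hp =>
    have hder : ∀ a b : σ, pderiv a (pderiv b (X k : MvPolynomial σ R)) = 0 := by
      intro a b
      by_cases h : k = b
      · subst h; rw [pderiv_X_self]; simp
      · rw [pderiv_X_of_ne h]; simp
    simp only [pderiv_mul, map_add, pderiv_mul, hp, hder]
    ring

theorem X_mul_X_mul_C (i j : Fin n) (a : R) :
    (X i * X j * C a : MvPolynomial (Fin n) R)
      = monomial (Finsupp.single i 1 + Finsupp.single j 1) a := by
  rw [show (X i : MvPolynomial (Fin n) R) = monomial (Finsupp.single i 1) 1 from rfl,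
    show (X j : MvPolynomial (Fin n) R) = monomial (Finsupp.single j 1) 1 from rfl,
    monomial_mul, mul_comm, C_mul_monomial]
  simp

theorem coeff_quad_form (M : Fin n → Fin n → R) (i0 j0 : Fin n) :
    coeff (Finsupp.single i0 1 + Finsupp.single j0 1)
      (∑ i : Fin n, ∑ j : Fin n, X i * X j * C (M i j))
      = if i0 = j0 then M i0 i0 else M i0 j0 + M j0 i0 := by
  classical
  simp only [X_mul_X_mul_C, coeff_sum, coeff_monomial]
  have hcond : ∀ i j : Fin n,
      (Finsupp.single i 1 + Finsupp.single j 1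
        = Finsupp.single i0 1 + Finsupp.single j0 1)
      ↔ ((i = i0 ∧ j = j0) ∨ (i = j0 ∧ j = i0)) := by
    intro i j
    rw [Finsupp.single_add_single_eq_single_add_single one_ne_zero one_ne_zero]
    constructor
    · rintro (h | h | h)
      · exact Or.inl h
      · exact Or.inr h.2
      · exact absurd h.1 (by norm_num)
    · rintro (h | h)
      · exact Or.inl h
      · exact Or.inr (Or.inl ⟨rfl, h⟩)
  simp only [hcond]
  by_cases hij : i0 = j0
  · subst hij
    rw [if_pos rfl]
    have : ∀ i j : Fin n, ((i = i0 ∧ j = i0) ∨ (i = i0 ∧ j = i0)) ↔ (i = i0 ∧ j = i0) :=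
      fun i j => or_self_iff
    simp only [this]
    simp [Finset.sum_ite_eq', ite_and]
  · rw [if_neg hij]
    have split : ∀ i j : Fin n,
        (if (i = i0 ∧ j = j0) ∨ (i = j0 ∧ j = i0) then M i j else 0)
        = (if i = i0 ∧ j = j0 then M i j else 0)
          + (if i = j0 ∧ j = i0 then M i j else 0) := by
      intro i j
      by_cases h1 : i = i0 ∧ j = j0
      · obtain ⟨rfl, rfl⟩ := h1
        simp [hij, Ne.symm hij]
      · by_cases h2 : i = j0 ∧ j = i0
        · obtain ⟨rfl, rfl⟩ := h2
          simp [h1, hij, Ne.symm hij]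
        · simp [h1, h2]
    simp only [split, Finset.sum_add_distrib]
    congr 1
    · simp [ite_and, Finset.sum_ite_eq']
    · simp [ite_and, Finset.sum_ite_eq']

theorem quad_form_inj [IsDomain R] [CharZero R] (M N : Fin n → Fin n → R)
    (hM : ∀ i j, M i j = M j i) (hN : ∀ i j, N i j = N j i)
    (h : (∑ i : Fin n, ∑ j : Fin n, X i * X j * C (M i j))
        = ∑ i : Fin n, ∑ j : Fin n, (X i * X j * C (N i j) : MvPolynomial (Fin n) R)) :
    ∀ i j, M i j = N i j := by
  intro i j
  have := congrArg (coeff (Finsupp.single i 1 + Finsupp.single j 1)) h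
  rw [coeff_quad_form, coeff_quad_form] at this
  by_cases hij : i = j
  · subst hij; simpa [if_pos rfl] using this
  · rw [if_neg hij, if_neg hij] at this
    rw [hM j i, hN j i] at this
    have h2 : (2 : R) * M i j = 2 * N i j := by ring_nf; ring_nf at this; linear_combination this
    exact mul_left_cancel₀ (two_ne_zero) h2

noncomputable def sumEq (n : ℕ) :
    MvPolynomial (Fin n ⊕ Fin n) ℝ ≃ₐ[ℝ] MvPolynomial (Fin n) (MvPolynomial (Fin n) ℝ) :=
  (renameEquiv ℝ (Equiv.sumComm (Fin n) (Fin n))).trans (sumAlgEquiv ℝ (Fin n) (Fin n))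

theorem sumEq_X_inr (i : Fin n) : sumEq n (X (Sum.inr i)) = X i := by
  simp [sumEq, sumAlgEquiv_X_inl]

theorem sumEq_rename_inl (q : MvPolynomial (Fin n) ℝ) :
    sumEq n (rename Sum.inl q) = C q := by
  have h1 : rename (⇑(Equiv.sumComm (Fin n) (Fin n))) (rename Sum.inl q)
      = rename Sum.inr q := by
    rw [rename_rename]
    rfl
  have h2 := congrArg (fun g => g q)
    (sumAlgEquiv_comp_rename_inr ℝ (Fin n) (Fin n))
  simp only [AlgHom.coe_comp, Function.comp_apply, AlgEquiv.toAlgHom_eq_coe,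
    AlgHom.coe_coe, IsScalarTower.coe_toAlgHom] at h2
  rw [sumEq, AlgEquiv.trans_apply, renameEquiv_apply, h1]
  exact h2

theorem list_sum_finset_sum {α β M : Type*} [AddCommMonoid M]
    (l : List α) (s : Finset β) (g : α → β → M) :
    (l.map fun a => ∑ b ∈ s, g a b).sum = ∑ b ∈ s, (l.map fun a => g a b).sum := by
  induction l with
  | nil => simp
  | cons a t ih => simp [ih, Finset.sum_add_distrib]

theorem list_map_sum_eq {α M : Type*} [AddCommMonoid M] (l : List α) (g : α → M) :
    (l.map g).sum = ∑ k : Fin l.length, g (l.get k) := by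
  induction l with
  | nil => simp
  | cons a t ih =>
    rw [List.map_cons, List.sum_cons, ih]
    exact (Fin.sum_univ_succ (f := fun k : Fin (t.length + 1) => g ((a :: t).get k))).symm

theorem list_sum_mul_left {α M : Type*} [NonUnitalNonAssocSemiring M]
    (l : List α) (x : M) (g : α → M) :
    (l.map fun a => x * g a).sum = x * (l.map g).sum := by
  induction l with
  | nil => simp
  | cons a t ih => simp [ih, mul_add]

theorem list_sum_C {α : Type*} {R : Type*} [CommRing R] {σ : Type*}
    (l : List α) (g : α → R) :
    (l.map fun a => (C (g a) : MvPolynomial σ R)).sum = C ((l.map g).sum) := by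
  induction l with
  | nil => simp
  | cons a t ih => simp [ih]

end SOSAux

open SOSAux in
theorem sos_aux (n : ℕ) (H : Fin n → Fin n → MvPolynomial (Fin n) ℝ)
    (hHsymm : ∀ i j, H i j = H j i) :
    (∃ (a : ℕ) (L : Matrix (Fin n) (Fin a) (MvPolynomial (Fin n) ℝ)),
        ∀ i j : Fin n, H i j = ∑ k : Fin a, L i k * L j k) ↔
      IsSumSq (∑ i : Fin n, ∑ j : Fin n,
        X (Sum.inr i) * X (Sum.inr j) * rename Sum.inl (H i j) :
          MvPolynomial (Fin n ⊕ Fin n) ℝ) := by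
  classical
  let A := MvPolynomial (Fin n) ℝ
  let B := MvPolynomial (Fin n) A
  set P' : MvPolynomial (Fin n ⊕ Fin n) ℝ :=
    ∑ i : Fin n, ∑ j : Fin n, X (Sum.inr i) * X (Sum.inr j) * rename Sum.inl (H i j) with hP'
  have heP' : sumEq n P' = ∑ i : Fin n, ∑ j : Fin n, (X i * X j * C (H i j) : B) := by
    rw [hP', map_sum]
    refine Finset.sum_congr rfl fun i _ => ?_
    rw [map_sum]
    refine Finset.sum_congr rfl fun j _ => ?_
    rw [map_mul, map_mul, sumEq_X_inr, sumEq_X_inr, sumEq_rename_inl]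
  constructor
  · rintro ⟨a, L, hL⟩
    have key : sumEq n P' = ∑ k : Fin a,
        (∑ i : Fin n, (C (L i k) * X i : B)) * (∑ i : Fin n, C (L i k) * X i) := by
      rw [heP']
      have expand : ∀ k : Fin a,
          (∑ i : Fin n, (C (L i k) * X i : B)) * (∑ i : Fin n, C (L i k) * X i)
          = ∑ i : Fin n, ∑ j : Fin n, (X i * X j * C (L i k * L j k) : B) := by
        intro k
        rw [Finset.sum_mul_sum]
        refine Finset.sum_congr rfl fun i _ => Finset.sum_congr rfl fun j _ => ?_
        rw [map_mul]
        ring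
      simp only [expand]
      have step1 : ∀ i j : Fin n, (X i * X j * C (H i j) : B)
          = ∑ k : Fin a, (X i * X j * C (L i k * L j k) : B) := by
        intro i j
        rw [hL i j, map_sum (C : MvPolynomial (Fin n) ℝ →+*
          MvPolynomial (Fin n) (MvPolynomial (Fin n) ℝ)) _ Finset.univ, Finset.mul_sum]
      simp only [step1]
      calc ∑ i : Fin n, ∑ j : Fin n, ∑ k : Fin a, (X i * X j * C (L i k * L j k) : B)
          = ∑ i : Fin n, ∑ k : Fin a, ∑ j : Fin n, (X i * X j * C (L i k * L j k) : B) :=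
            Finset.sum_congr rfl fun i _ => Finset.sum_comm
        _ = ∑ k : Fin a, ∑ i : Fin n, ∑ j : Fin n, (X i * X j * C (L i k * L j k) : B) :=
            Finset.sum_comm
    have hsq : IsSumSq (sumEq n P') := by
      rw [key]
      exact IsSumSq.sum_mul_self Finset.univ _
    have h2 := isSumSq_map ((sumEq n).symm : B →+* MvPolynomial (Fin n ⊕ Fin n) ℝ) hsq
    have h3 : ((sumEq n).symm : B →+* MvPolynomial (Fin n ⊕ Fin n) ℝ) (sumEq n P') = P' :=
      (sumEq n).symm_apply_apply P'
    rwa [h3] at h2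
  · intro hsum
    have hsq : IsSumSq (sumEq n P') :=
      isSumSq_map ((sumEq n) : MvPolynomial (Fin n ⊕ Fin n) ℝ →+* B) hsum
    obtain ⟨l, hl⟩ := isSumSq_list hsq
    have hFRB : FR B := by
      refine fr_of_injective ((sumEq n).symm : B →+* MvPolynomial (Fin n ⊕ Fin n) ℝ)
        ?_ (fr_mv _)
      exact (sumEq n).symm.injective
    have hPmem : sumEq n P' ∈ homogeneousSubmodule (Fin n) A 2 := by
      rw [heP']
      refine Submodule.sum_mem _ fun i _ => Submodule.sum_mem _ fun j _ => ?_
      rw [mem_homogeneousSubmodule]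
      have := ((isHomogeneous_X A i).mul (isHomogeneous_X A j)).mul
        (isHomogeneous_C (Fin n) (H i j))
      simpa using this
    have hlsum : (l.map fun q => q * q).sum = sumEq n P' := hl.symm
    have hdeg := totalDegree_le_one hFRB hPmem l hlsum
    have hconst := constCoeff_eq_zero hFRB hPmem l hlsum
    set c : B → Fin n → A := fun q i => coeff (Finsupp.single i 1) q with hc
    have hrep : ∀ q ∈ l, q = ∑ i : Fin n, (C (c q i) * X i : B) :=
      fun q hq => eq_linear_form q (hdeg q hq) (hconst q hq)
    set N : Fin n → Fin n → A := fun i j => ∑ k : Fin l.length, c (l.get k) i * c (l.get k) j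
      with hN
    have hNsymm : ∀ i j, N i j = N j i := by
      intro i j
      refine Finset.sum_congr rfl fun k _ => mul_comm _ _
    have main : (∑ i : Fin n, ∑ j : Fin n, (X i * X j * C (H i j) : B))
        = ∑ i : Fin n, ∑ j : Fin n, (X i * X j * C (N i j) : B) := by
      rw [← heP', hl]
      have e1 : (l.map fun q => q * q)
          = l.map fun q => ∑ i : Fin n, ∑ j : Fin n, ((X i * X j : B) * C (c q i * c q j)) := by
        apply List.map_congr_left
        intro q hq
        conv_lhs => rw [hrep q hq]
        rw [Finset.sum_mul_sum]
        refine Finset.sum_congr rfl fun i _ => Finset.sum_congr rfl fun j _ => ?_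
        rw [map_mul]
        ring
      rw [e1, list_sum_finset_sum]
      refine Finset.sum_congr rfl fun i _ => ?_
      rw [list_sum_finset_sum]
      refine Finset.sum_congr rfl fun j _ => ?_
      rw [list_sum_mul_left, list_sum_C]
      have e5 : (l.map fun q => c q i * c q j).sum
          = ∑ k : Fin l.length, c (l.get k) i * c (l.get k) j :=
        list_map_sum_eq l _
      rw [e5]
    have final := quad_form_inj H N hHsymm hNsymm main
    exact ⟨l.length, fun i k => c (l.get k) i, fun i j => final i j⟩

open SOSAux in
/-- (Ahmadi–Parrilo) A polynomial `f ∈ ℝ[x₁, …, xₙ]` is SOS-convex (its Hessian factors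
as `L·Lᵀ` for some polynomial matrix `L`) if and only if the polynomial
`∑ i j, z_i z_j ∂²f/∂x_i∂x_j`, regarded as a polynomial in the `2n` variables
`x₁, …, xₙ, z₁, …, zₙ`, is a sum of squares. -/
theorem sos_convex_iff_isSumSq (n : ℕ) (f : MvPolynomial (Fin n) ℝ) :
    (∃ (a : ℕ) (L : Matrix (Fin n) (Fin a) (MvPolynomial (Fin n) ℝ)),
        ∀ i j : Fin n, pderiv i (pderiv j f) = ∑ k : Fin a, L i k * L j k) ↔
      IsSumSq (∑ i : Fin n, ∑ j : Fin n,
        X (Sum.inr i) * X (Sum.inr j) * rename Sum.inl (pderiv i (pderiv j f)) :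
          MvPolynomial (Fin n ⊕ Fin n) ℝ) := by
  exact sos_aux n (fun i j => pderiv i (pderiv j f))
    (fun i j => pderiv_pderiv_comm i j f)
end
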